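/- Let α : ℝ^m → ℝ be a locally Lipschitz function such that α(c)/‖c‖ → ∞ as ‖c‖ → ∞ (superlinearity). Then the union over all c ∈ ℝ^m of the Clarke subdifferentials ∂α(c) is all of (ℝ^m)*. -/

import Mathlib

open Filter

/-- The Clarke generalized directional derivative of `f` at `x` in direction `v`. -/
noncomputable def clarkeDeriv {V : Type*} [NormedAddCommGroup V] [NormedSpace ℝ V]
    (f : V → ℝ) (x v : V) : ℝ :=
  Filter.limsup (fun p : V × ℝ => (f (p.1 + p.2 • v) - f p.1) / p.2)
    ((nhds x) ×ˢ (nhdsWithin 0 (Set.Ioi 0)))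

/-- The Clarke subdifferential of `f` at `x`. -/
def clarkeSubdiff {V : Type*} [NormedAddCommGroup V] [NormedSpace ℝ V]
    (f : V → ℝ) (x : V) : Set (V →ₗ[ℝ] ℝ) :=
  {g | ∀ v : V, g v ≤ clarkeDeriv f x v}

set_option maxHeartbeats 2000000 in
/-- If `α : ℝ^m → ℝ` is locally Lipschitz and superlinear (`α c / ‖c‖ → ∞` as `‖c‖ → ∞`),
then every linear functional lies in the Clarke subdifferential `∂α(c)` for some `c`;
i.e. the union of all Clarke subdifferentials is all of `(ℝ^m)*`. -/
theorem stmt3 {m : ℕ} (α : EuclideanSpace ℝ (Fin m) → ℝ) (hα : LocallyLipschitz α)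
    (hsuper : Filter.Tendsto (fun c : EuclideanSpace ℝ (Fin m) => α c / ‖c‖)
      (Filter.cocompact (EuclideanSpace ℝ (Fin m))) Filter.atTop) :
    ∀ h : EuclideanSpace ℝ (Fin m) →ₗ[ℝ] ℝ,
      ∃ c : EuclideanSpace ℝ (Fin m), h ∈ clarkeSubdiff α c := by
  intro h
  -- view `h` as a continuous linear map to get a norm bound
  set H : EuclideanSpace ℝ (Fin m) →L[ℝ] ℝ := LinearMap.toContinuousLinearMap h with hH
  have hHapp : ∀ x, H x = h x := fun x => rfl
  -- f := α - h is continuous and tends to atTop on cocompact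
  set f : EuclideanSpace ℝ (Fin m) → ℝ := fun x => α x - h x with hf
  have hfc : Continuous f := hα.continuous.sub H.continuous
  have hcoer : Tendsto f (cocompact _) atTop := by
    rw [tendsto_atTop]
    intro M
    have h1 : ∀ᶠ x : EuclideanSpace ℝ (Fin m) in cocompact _,
        max M 0 + ‖H‖ ≤ α x / ‖x‖ := hsuper.eventually (eventually_ge_atTop _)
    have h2 : ∀ᶠ x : EuclideanSpace ℝ (Fin m) in cocompact _, (1:ℝ) ≤ ‖x‖ :=
      tendsto_norm_cocompact_atTop.eventually (eventually_ge_atTop 1)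
    filter_upwards [h1, h2] with x hx1 hx2
    have hxpos : (0:ℝ) < ‖x‖ := lt_of_lt_of_le one_pos hx2
    have hbound : h x ≤ ‖H‖ * ‖x‖ := by
      calc h x = H x := (hHapp x).symm
        _ ≤ |H x| := le_abs_self _
        _ ≤ ‖H‖ * ‖x‖ := H.le_opNorm x
    have : α x = (α x / ‖x‖) * ‖x‖ := (div_mul_cancel₀ _ hxpos.ne').symm
    have key : max M 0 * ‖x‖ ≤ f x := by
      have : (max M 0 + ‖H‖) * ‖x‖ ≤ α x := by
        rw [show α x = (α x / ‖x‖) * ‖x‖ from this]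
        exact mul_le_mul_of_nonneg_right hx1 hxpos.le
      have := this
      simp only [hf]
      nlinarith [hbound]
    calc M ≤ max M 0 := le_max_left _ _
      _ = max M 0 * 1 := (mul_one _).symm
      _ ≤ max M 0 * ‖x‖ := by
          exact mul_le_mul_of_nonneg_left hx2 (le_max_right M 0)
      _ ≤ f x := key
  -- f attains a global minimum at some c
  obtain ⟨c, hc⟩ := hfc.exists_forall_le hcoer
  refine ⟨c, fun v => ?_⟩
  -- it suffices: h v ≤ limsup of difference quotients of α at c in direction v
  -- boundedness above of the quotients near (c, 0+), from local Lipschitzness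
  obtain ⟨K, U, hU, hK⟩ := hα c
  obtain ⟨ε, hε, hball⟩ := Metric.mem_nhds_iff.mp hU
  set δ : ℝ := ε / (2 * (‖v‖ + 1)) with hδ
  have hvpos : (0:ℝ) < ‖v‖ + 1 := by positivity
  have hδpos : 0 < δ := by positivity
  have hbdd : IsBoundedUnder (· ≤ ·) ((nhds c) ×ˢ (nhdsWithin 0 (Set.Ioi 0)))
      (fun p : (EuclideanSpace ℝ (Fin m)) × ℝ => (α (p.1 + p.2 • v) - α p.1) / p.2) := by
    refine ⟨(K : ℝ) * ‖v‖, eventually_map.mpr ?_⟩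
    have hx : ∀ᶠ x : EuclideanSpace ℝ (Fin m) in nhds c, x ∈ Metric.ball c (ε/2) :=
      Metric.ball_mem_nhds c (by positivity)
    have ht : ∀ᶠ t : ℝ in nhdsWithin 0 (Set.Ioi 0), t ∈ Set.Ioo 0 δ :=
      Ioo_mem_nhdsGT_of_mem ⟨le_refl 0, hδpos⟩
    filter_upwards [hx.prod_mk ht] with p hp
    obtain ⟨hp1, hp2⟩ := hp
    have ht0 : 0 < p.2 := hp2.1
    have h1mem : p.1 ∈ U := hball (Metric.ball_subset_ball (by linarith) hp1)
    have h2mem : p.1 + p.2 • v ∈ U := by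
      apply hball
      rw [Metric.mem_ball, dist_eq_norm]
      have : p.1 + p.2 • v - c = (p.1 - c) + p.2 • v := by abel
      rw [this]
      have hb1 : ‖p.1 - c‖ < ε/2 := by
        rw [← dist_eq_norm]; exact hp1
      have hb2 : ‖p.2 • v‖ < ε/2 := by
        rw [norm_smul, Real.norm_eq_abs, abs_of_pos ht0]
        have : p.2 * ‖v‖ < δ * (‖v‖ + 1) := by
          have := hp2.2
          nlinarith [norm_nonneg v]
        have hδv : δ * (‖v‖ + 1) = ε / 2 := by
          field_simp [hδ]
          have h2 : δ * (2 * (‖v‖ + 1)) = ε := by rw [hδ]; exact div_mul_cancel₀ _ (by positivity)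
          linarith
        linarith
      calc ‖(p.1 - c) + p.2 • v‖ ≤ ‖p.1 - c‖ + ‖p.2 • v‖ := norm_add_le _ _
        _ < ε := by linarith
    have hlip := hK.dist_le_mul _ h2mem _ h1mem
    have : α (p.1 + p.2 • v) - α p.1 ≤ (K : ℝ) * (p.2 * ‖v‖) := by
      have hd : dist (α (p.1 + p.2 • v)) (α p.1) ≤ (K:ℝ) * dist (p.1 + p.2 • v) p.1 := hlip
      have hdd : dist (p.1 + p.2 • v) p.1 = p.2 * ‖v‖ := by
        rw [dist_eq_norm]
        have : p.1 + p.2 • v - p.1 = p.2 • v := by abel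
        rw [this, norm_smul, Real.norm_eq_abs, abs_of_pos ht0]
      rw [hdd] at hd
      calc α (p.1 + p.2 • v) - α p.1 ≤ |α (p.1 + p.2 • v) - α p.1| := le_abs_self _
        _ = dist (α (p.1 + p.2 • v)) (α p.1) := (Real.dist_eq _ _).symm
        _ ≤ (K:ℝ) * (p.2 * ‖v‖) := hd
    rw [div_le_iff₀ ht0]
    calc α (p.1 + p.2 • v) - α p.1 ≤ (K : ℝ) * (p.2 * ‖v‖) := this
      _ = (K:ℝ) * ‖v‖ * p.2 := by ring
  -- frequently: along the path x = c
  have hfreq : ∃ᶠ p : (EuclideanSpace ℝ (Fin m)) × ℝ in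
      ((nhds c) ×ˢ (nhdsWithin 0 (Set.Ioi 0))),
      h v ≤ (α (p.1 + p.2 • v) - α p.1) / p.2 := by
    have htend : Tendsto (fun t : ℝ => ((c : EuclideanSpace ℝ (Fin m)), t))
        (nhdsWithin 0 (Set.Ioi 0)) ((nhds c) ×ˢ (nhdsWithin 0 (Set.Ioi 0))) :=
      tendsto_const_nhds.prodMk tendsto_id
    apply htend.frequently
    apply Eventually.frequently
    filter_upwards [self_mem_nhdsWithin] with t ht
    have ht0 : (0:ℝ) < t := ht
    have hmin : f c ≤ f (c + t • v) := hc _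
    have : α c - h c ≤ α (c + t • v) - h (c + t • v) := hmin
    have hlin : h (c + t • v) = h c + t * h v := by
      simp [map_add, map_smul, smul_eq_mul]
    rw [le_div_iff₀ ht0]
    have : t * h v ≤ α (c + t • v) - α c := by
      rw [hlin] at this
      linarith
    linarith [this]
  show h v ≤ clarkeDeriv α c v
  rw [clarkeDeriv]
  exact le_limsup_of_frequently_le hfreq hbdd
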